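/- arXiv:1505.03006 — 4 statements merged into one kernel-verified Lean document; each statement's English description precedes it below -/
import Mathlib

section
/- Let f : ℝ₊^N → ℝ₊₊ be an upper semicontinuous concave function, let S := ⋃_{x ∈ ℝ₊^N} ∂f(x) be the set of all supergradients of f, and for k ∈ {1,…,N} define g_k* := inf{ g_k : g = (g₁,…,g_N) ∈ S }. Then for every k ∈ {1,…,N}, g_k* is a nonnegative real number and g_k* = lim_{h → 0⁺} h · f(h⁻¹ · e_k). -/
open Matrix Filter Topology

noncomputable section

/-- `g` is a supergradient of `f` at `x`: the supergradient inequality holds for all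
points `y` in the nonnegative orthant. -/
def IsSupergrad {N : ℕ} (f : (Fin N → ℝ) → ℝ) (x g : Fin N → ℝ) : Prop :=
  ∀ y : Fin N → ℝ, 0 ≤ y → f y ≤ f x + ∑ i, g i * (y i - x i)

lemma supergrad_nonneg {N : ℕ} {f : (Fin N → ℝ) → ℝ}
    (hpos : ∀ x : Fin N → ℝ, 0 ≤ x → 0 < f x)
    {x g : Fin N → ℝ} (hx : 0 ≤ x) (hg : IsSupergrad f x g) (i : Fin N) : 0 ≤ g i := by
  by_contra hcon
  push_neg at hcon
  set t : ℝ := f x / (-g i) with ht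
  have hfx := hpos x hx
  have htpos : 0 < t := div_pos hfx (neg_pos.2 hcon)
  have hy : (0 : Fin N → ℝ) ≤ x + t • (Pi.single i 1 : Fin N → ℝ) := by
    intro j
    have h1 := hx j
    simp only [Pi.zero_apply, Pi.add_apply, Pi.smul_apply, Pi.single_apply, smul_eq_mul]
    by_cases h : j = i
    · simp only [h, if_pos rfl]
      have := hx i
      simp only [Pi.zero_apply] at this
      simp [h]
      linarith
    · simpa [h] using hx j
  have hsum : ∑ j, g j * ((x + t • (Pi.single i 1 : Fin N → ℝ)) j - x j) = g i * t := by
    simp only [Pi.add_apply, Pi.smul_apply, Pi.single_apply, smul_eq_mul,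
      add_sub_cancel_left, mul_ite, mul_one, mul_zero]
    simp [Finset.sum_ite_eq', mul_comm]
  have h2 := hg _ hy
  rw [hsum] at h2
  have h3 : g i * t = -(f x) := by
    have hne : g i ≠ 0 := hcon.ne
    rw [ht]
    rw [mul_div_assoc']
    rw [div_eq_iff (neg_ne_zero.mpr hne)]
    ring
  rw [h3] at h2
  have := hpos _ hy
  linarith

lemma exists_supergrad {N : ℕ} {f : (Fin N → ℝ) → ℝ}
    (hconc : ConcaveOn ℝ {x : Fin N → ℝ | 0 ≤ x} f)
    (hpos : ∀ x : Fin N → ℝ, 0 ≤ x → 0 < f x)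
    {x : Fin N → ℝ} (hx : ∀ i, 0 < x i) :
    ∃ g : Fin N → ℝ, IsSupergrad f x g := by
  classical
  set H : Set ((Fin N → ℝ) × ℝ) := {p | 0 ≤ p.1 ∧ p.2 < f p.1} with hHdef
  have hx0 : (0:Fin N → ℝ) ≤ x := fun i => (hx i).le
  have horth : Convex ℝ {x : Fin N → ℝ | 0 ≤ x} := by
    intro y hy z hz a b ha hb hab
    intro i
    have h1 : (0:ℝ) ≤ y i := hy i
    have h2 : (0:ℝ) ≤ z i := hz i
    simp only [Pi.add_apply, Pi.smul_apply, smul_eq_mul, Pi.zero_apply]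
    exact add_nonneg (mul_nonneg ha h1) (mul_nonneg hb h2)
  have hxmem : x ∈ {x : Fin N → ℝ | 0 ≤ x} := hx0
  -- convexity of H
  have hH : Convex ℝ H := by
    rintro ⟨y, s⟩ ⟨hy, hs⟩ ⟨z, r⟩ ⟨hz, hr⟩ a b ha hb hab
    have hmem : a • y + b • z ∈ {x : Fin N → ℝ | 0 ≤ x} :=
      horth hy hz ha hb hab
    refine ⟨hmem, ?_⟩
    rcases eq_or_lt_of_le ha with ha0 | ha'
    · have hb1 : b = 1 := by linarith
      simp only [Prod.smul_mk, Prod.mk_add_mk, smul_eq_mul, ← ha0, hb1]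
      simpa using hr
    rcases eq_or_lt_of_le hb with hb0 | hb'
    · have ha1 : a = 1 := by linarith
      simp only [Prod.smul_mk, Prod.mk_add_mk, smul_eq_mul, ← hb0, ha1]
      simpa using hs
    have hcc := hconc.2 hy hz ha hb hab
    simp only [Prod.smul_mk, Prod.mk_add_mk, smul_eq_mul] at *
    have h1 : a * s < a * f y := by exact (mul_lt_mul_iff_right₀ ha').2 hs
    have h2 : b * r < b * f z := by exact (mul_lt_mul_iff_right₀ hb').2 hr
    linarith
  -- an open convex subset of H
  set O : Set ((Fin N → ℝ) × ℝ) := {p | (∀ i, 0 < p.1 i) ∧ p.2 < 0} with hOdef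
  have hOopen : IsOpen O := by
    have h1 : IsOpen {p : (Fin N → ℝ) × ℝ | ∀ i, 0 < p.1 i} := by
      have heq : {p : (Fin N → ℝ) × ℝ | ∀ i, 0 < p.1 i}
          = ⋂ i, {p : (Fin N → ℝ) × ℝ | 0 < p.1 i} := by
        ext p; simp
      rw [heq]
      exact isOpen_iInter_of_finite fun i =>
        (isOpen_lt continuous_const ((continuous_apply i).comp continuous_fst))
    have h2 : IsOpen {p : (Fin N → ℝ) × ℝ | p.2 < 0} :=
      isOpen_lt continuous_snd continuous_const
    exact h1.inter h2
  have hOH : O ⊆ H := by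
    rintro ⟨y, s⟩ ⟨hy, hs⟩
    exact ⟨fun i => (hy i).le, hs.trans (hpos y fun i => (hy i).le)⟩
  set z : (Fin N → ℝ) × ℝ := (x, -1) with hzdef
  have hzO : z ∈ O := ⟨hx, by norm_num⟩
  have hzint : z ∈ interior H := interior_maximal hOH hOopen hzO
  set p : (Fin N → ℝ) × ℝ := (x, f x) with hpdef
  have hpH : p ∉ interior H := fun hmem => lt_irrefl (f x) (interior_subset hmem).2
  obtain ⟨ℓ, hℓ⟩ := geometric_hahn_banach_open_point hH.interior isOpen_interior hpH
  -- ℓ a ≤ ℓ p for all a ∈ H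
  have hle : ∀ a ∈ H, ℓ a ≤ ℓ p := by
    intro a ha
    have key : ∀ c : ℝ, c ∈ Set.Ioo (0:ℝ) 1 → (1 - c) * ℓ a + c * ℓ z ≤ ℓ p := by
      intro c hc
      have hmem : (1 - c) • a + c • z ∈ interior H :=
        hH.combo_self_interior_mem_interior ha hzint (by linarith [hc.2]) hc.1 (by ring)
      have h := (hℓ _ hmem).le
      simpa [map_add, _root_.map_smul, smul_eq_mul] using h
    by_contra hcon
    push_neg at hcon
    set d : ℝ := ℓ a - ℓ z with hd
    set ε : ℝ := ℓ a - ℓ p with hε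
    have hε0 : 0 < ε := sub_pos.2 hcon
    set c : ℝ := min (1/2) (ε / (2 * (|d| + 1))) with hcdef
    have hd1 : (0:ℝ) < |d| + 1 := by positivity
    have hc0 : 0 < c := lt_min (by norm_num) (by positivity)
    have hc1 : c < 1 := lt_of_le_of_lt (min_le_left _ _) (by norm_num)
    have h1 := key c ⟨hc0, hc1⟩
    have h2 : c * |d| ≤ ε / 2 := by
      have hcle : c ≤ ε / (2 * (|d| + 1)) := min_le_right _ _
      calc c * |d| ≤ ε / (2 * (|d| + 1)) * |d| :=
            mul_le_mul_of_nonneg_right hcle (abs_nonneg _)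
        _ ≤ ε / 2 := by
            rw [div_mul_eq_mul_div, div_le_div_iff₀ (by positivity) (by norm_num)]
            nlinarith [abs_nonneg d]
    have h3 : c * d ≤ c * |d| := mul_le_mul_of_nonneg_left (le_abs_self d) hc0.le
    have h1' : ℓ a - c * d ≤ ℓ p := by
      have heq2 : ℓ a - c * d = (1 - c) * ℓ a + c * ℓ z := by rw [hd]; ring
      rw [heq2]
      exact h1
    linarith
  -- split ℓ into linear part and vertical coefficient
  set c₀ : ℝ := ℓ ((0 : Fin N → ℝ), (1:ℝ)) with hc₀
  have hsplit : ∀ (w : Fin N → ℝ) (t : ℝ), ℓ (w, t) = ℓ (w, 0) + t * c₀ := by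
    intro w t
    have heq : ((w, t) : (Fin N → ℝ) × ℝ) = (w, 0) + t • ((0 : Fin N → ℝ), (1:ℝ)) := by
      simp [Prod.ext_iff]
    rw [heq, map_add, _root_.map_smul, smul_eq_mul, hc₀]
  have hfx := hpos x hx0
  -- c₀ is nonnegative
  have hc0nn : 0 ≤ c₀ := by
    have hmem : ((x, f x - 1) : (Fin N → ℝ) × ℝ) ∈ H := ⟨hx0, by simp⟩
    have h := hle _ hmem
    rw [hsplit x (f x - 1)] at h
    have hp' : ℓ p = ℓ (x, 0) + f x * c₀ := hsplit x (f x)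
    rw [hp'] at h
    nlinarith
  -- c₀ is nonzero
  have hc0pos : 0 < c₀ := by
    rcases hc0nn.lt_or_eq with hlt | heq0
    · exact hlt
    exfalso
    have hkey : ∀ v : Fin N → ℝ, ℓ (v, 0) ≤ 0 := by
      intro v
      obtain ⟨s, hs, hsv⟩ : ∃ s : ℝ, 0 < s ∧ (0:Fin N → ℝ) ≤ x + s • v := by
        rcases isEmpty_or_nonempty (Fin N) with hN | hN
        · exact ⟨1, one_pos, fun i => (hN.false i).elim⟩
        · set m : ℝ := Finset.univ.inf' (Finset.univ_nonempty) x with hm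
          have hm0 : 0 < m := by
            rw [hm, Finset.lt_inf'_iff]
            exact fun i _ => hx i
          refine ⟨m / (‖v‖ + 1), by positivity, fun i => ?_⟩
          have hvi : |v i| ≤ ‖v‖ := by
            simpa [Real.norm_eq_abs] using norm_le_pi_norm v i
          have hmi : m ≤ x i := Finset.inf'_le _ (Finset.mem_univ i)
          have hv0 : (0:ℝ) ≤ ‖v‖ := norm_nonneg v
          simp only [Pi.zero_apply, Pi.add_apply, Pi.smul_apply, smul_eq_mul]
          have hc : (0:ℝ) < ‖v‖ + 1 := by positivity
          have h1 : -(m / (‖v‖ + 1) * |v i|) ≤ m / (‖v‖ + 1) * v i := by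
            have := neg_abs_le (v i)
            nlinarith [div_nonneg hm0.le hc.le]
          have h2 : m / (‖v‖ + 1) * |v i| ≤ m / (‖v‖ + 1) * (‖v‖ + 1) :=
            mul_le_mul_of_nonneg_left (by linarith) (by positivity)
          have h3 : m / (‖v‖ + 1) * (‖v‖ + 1) = m := by field_simp
          nlinarith
      have hmem : ((x + s • v, f (x + s • v) - 1) : (Fin N → ℝ) × ℝ) ∈ H :=
        ⟨hsv, by simp⟩
      have h1 := hle _ hmem
      rw [hsplit (x + s • v) _] at h1
      have hp' : ℓ p = ℓ (x, 0) + f x * c₀ := hsplit x (f x)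
      rw [hp', ← heq0] at h1
      simp only [mul_zero, add_zero] at h1
      have h2 : ℓ ((x + s • v : Fin N → ℝ), (0:ℝ)) = ℓ (x, 0) + s * ℓ (v, 0) := by
        have heq : ((x + s • v, (0:ℝ)) : (Fin N → ℝ) × ℝ)
            = (x, 0) + s • ((v, 0) : (Fin N → ℝ) × ℝ) := by
          simp [Prod.ext_iff]
        rw [heq, map_add, _root_.map_smul, smul_eq_mul]
      rw [h2] at h1
      nlinarith
    have hzero : ∀ v : Fin N → ℝ, ℓ (v, 0) = 0 := by
      intro v
      have h1 := hkey v
      have h2 := hkey (-v)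
      have h3 : ℓ ((-v : Fin N → ℝ), (0:ℝ)) = -ℓ (v, 0) := by
        have heq : ((-v, (0:ℝ)) : (Fin N → ℝ) × ℝ) = -((v, 0) : (Fin N → ℝ) × ℝ) := by
          simp [Prod.ext_iff]
        rw [heq, map_neg]
      rw [h3] at h2
      linarith
    have hz1 : ℓ z < ℓ p := hℓ z hzint
    have hz2 : ℓ z = ℓ (x, 0) + (-1) * c₀ := hsplit x (-1)
    have hp2 : ℓ p = ℓ (x, 0) + f x * c₀ := hsplit x (f x)
    rw [hz2, hp2, ← heq0] at hz1
    simp at hz1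
  -- the supergradient
  set b : Fin N → (Fin N → ℝ) := fun i => (fun j => if i = j then (1:ℝ) else 0) with hb
  set g : Fin N → ℝ := fun i => -ℓ (b i, 0) / c₀ with hgdef
  have hlin : ∀ w : Fin N → ℝ, ℓ (w, (0:ℝ)) = ∑ i, w i * ℓ (b i, 0) := by
    intro w
    have hw : ((w, (0:ℝ)) : (Fin N → ℝ) × ℝ) = ∑ i, w i • ((b i, 0) : (Fin N → ℝ) × ℝ) := by
      apply Prod.ext
      · rw [Prod.fst_sum]
        simp only [Prod.smul_mk, Prod.fst]
        exact pi_eq_sum_univ w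
      · rw [Prod.snd_sum]
        simp
    rw [hw, map_sum]
    apply Finset.sum_congr rfl
    intro i _
    rw [_root_.map_smul, smul_eq_mul]
  refine ⟨g, ?_⟩
  intro y hy
  have hmain : ∀ t : ℝ, t < f y → ℓ (y, 0) + t * c₀ ≤ ℓ (x, 0) + f x * c₀ := by
    intro t ht
    have hmem : ((y, t) : (Fin N → ℝ) × ℝ) ∈ H := ⟨hy, ht⟩
    have h := hle _ hmem
    rw [hsplit y t] at h
    have hp2 : ℓ p = ℓ (x, 0) + f x * c₀ := hsplit x (f x)
    rw [hp2] at h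
    exact h
  have hfy : f y ≤ f x + (ℓ (x, (0:ℝ)) - ℓ (y, 0)) / c₀ := by
    by_contra hcon
    push_neg at hcon
    obtain ⟨t, htA, ht1⟩ := exists_between hcon
    have h := hmain t ht1
    have hmul : (f x + (ℓ (x, (0:ℝ)) - ℓ (y, 0)) / c₀) * c₀ < t * c₀ :=
      mul_lt_mul_of_pos_right htA hc0pos
    have hexp : (f x + (ℓ (x, (0:ℝ)) - ℓ (y, 0)) / c₀) * c₀
        = f x * c₀ + (ℓ (x, (0:ℝ)) - ℓ (y, 0)) := by
      field_simp
    linarith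
  have hsum : ∑ i, g i * (y i - x i) = (ℓ (x, (0:ℝ)) - ℓ (y, 0)) / c₀ := by
    have h1 : ∑ i, g i * (y i - x i) = (∑ i, (y i - x i) * ℓ (b i, 0)) * (-1 / c₀) := by
      rw [Finset.sum_mul]
      apply Finset.sum_congr rfl
      intro i _
      simp only [hgdef]
      ring
    have h2 := hlin (y - x)
    have h3 : ∑ i, (y - x : Fin N → ℝ) i * ℓ (b i, 0) = ∑ i, (y i - x i) * ℓ (b i, 0) := by
      apply Finset.sum_congr rfl
      intro i _
      simp
    have h4 : ℓ ((y - x : Fin N → ℝ), (0:ℝ)) = ℓ (y, 0) - ℓ (x, 0) := by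
      have heq : ((y - x, (0:ℝ)) : (Fin N → ℝ) × ℝ)
          = ((y, 0) : (Fin N → ℝ) × ℝ) - (x, 0) := by
        simp [Prod.ext_iff]
      rw [heq, map_sub]
    rw [h1, ← h3, ← h2, h4]
    field_simp
    ring
  rw [hsum]
  exact hfy


/-- The componentwise infimum of the supergradients of a positive usc concave function is a
nonnegative real, and it equals the limit of h·f(h⁻¹·e_k) as h → 0⁺. -/
theorem inf_supergradient_component_eq_limit {N : ℕ} (f : (Fin N → ℝ) → ℝ)
    (hconc : ConcaveOn ℝ {x : Fin N → ℝ | 0 ≤ x} f)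
    (husc : UpperSemicontinuousOn f {x : Fin N → ℝ | 0 ≤ x})
    (hpos : ∀ x : Fin N → ℝ, 0 ≤ x → 0 < f x)
    (k : Fin N) (gstar : ℝ)
    (hgstar : gstar =
      sInf {t : ℝ | ∃ x : Fin N → ℝ, 0 ≤ x ∧
        ∃ g : Fin N → ℝ, IsSupergrad f x g ∧ g k = t}) :
    0 ≤ gstar ∧
      Tendsto (fun h : ℝ => h * f (h⁻¹ • (Pi.single k 1 : Fin N → ℝ)))
        (𝓝[>] (0 : ℝ)) (𝓝 gstar) := by
  classical
  set S : Set ℝ := {t : ℝ | ∃ x : Fin N → ℝ, 0 ≤ x ∧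
    ∃ g : Fin N → ℝ, IsSupergrad f x g ∧ g k = t} with hS
  set e : Fin N → ℝ := Pi.single k 1 with he
  have he0 : (0:Fin N → ℝ) ≤ e := by
    intro j
    rw [he]
    by_cases h : j = k <;> simp [Pi.single_apply, h]
  have hsm : ∀ t : ℝ, 0 ≤ t → (0:Fin N → ℝ) ≤ t • e := by
    intro t ht j
    have h1 := he0 j
    simp only [Pi.smul_apply, smul_eq_mul, Pi.zero_apply] at *
    exact mul_nonneg ht h1
  set F : ℝ → ℝ := fun t => f (t • e) / t with hF
  have hFanti : ∀ s t : ℝ, 0 < s → s ≤ t → F t ≤ F s := by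
    intro s t hs hst
    have ht : 0 < t := hs.trans_le hst
    have hmem1 : t • e ∈ {x : Fin N → ℝ | 0 ≤ x} := hsm t ht.le
    have hmem0 : (0:Fin N → ℝ) ∈ {x : Fin N → ℝ | 0 ≤ x} := by
      show (0:Fin N → ℝ) ≤ 0
      exact le_refl _
    have hd1 : s / t ≤ 1 := by
      rw [div_le_one ht]; exact hst
    have hab : s / t + (1 - s / t) = 1 := by ring
    have hcc := hconc.2 hmem1 hmem0 (div_nonneg hs.le ht.le)
      (by rw [sub_nonneg]; exact hd1) hab
    have hpt : (s / t) • (t • e) + (1 - s / t) • (0:Fin N → ℝ) = s • e := by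
      rw [smul_zero, add_zero, smul_smul, div_mul_cancel₀ _ ht.ne']
    rw [hpt] at hcc
    have hf0 : 0 < f 0 := hpos 0 (le_refl _)
    have h1 : s / t * f (t • e) ≤ f (s • e) := by
      have h2 : 0 ≤ (1 - s / t) * f 0 :=
        mul_nonneg (by rw [sub_nonneg]; exact hd1) hf0.le
      simp only [smul_eq_mul] at hcc
      linarith
    have h1' : s * f (t • e) ≤ f (s • e) * t := by
      rwa [div_mul_eq_mul_div, div_le_iff₀ ht] at h1
    rw [hF]
    simp only
    rw [div_le_div_iff₀ ht hs]
    linarith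
  set A : ℝ → ℝ := fun t => F (max t 1) with hA
  have hApos : ∀ t, 0 < A t := by
    intro t
    have h1 : (0:ℝ) < max t 1 := lt_of_lt_of_le one_pos (le_max_right t 1)
    exact div_pos (hpos _ (hsm _ h1.le)) h1
  have hAanti : Antitone A := fun s t hst =>
    hFanti (max s 1) (max t 1) (lt_of_lt_of_le one_pos (le_max_right s 1))
      (max_le_max hst le_rfl)
  have hbddA : BddBelow (Set.range A) := ⟨0, by rintro r ⟨t, rfl⟩; exact (hApos t).le⟩
  set L : ℝ := ⨅ t, A t with hL
  have htendsA : Tendsto A atTop (𝓝 L) := tendsto_atTop_ciInf hAanti hbddA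
  have hL0 : 0 ≤ L := le_ciInf fun t => (hApos t).le
  have htendsF : Tendsto F atTop (𝓝 L) := by
    apply htendsA.congr'
    filter_upwards [eventually_ge_atTop (1:ℝ)] with t ht
    rw [hA]
    simp only
    rw [max_eq_left ht]
  have htendphi : Tendsto (fun h : ℝ => h * f (h⁻¹ • e)) (𝓝[>] (0:ℝ)) (𝓝 L) := by
    have h1 : Tendsto (fun h : ℝ => F h⁻¹) (𝓝[>] (0:ℝ)) (𝓝 L) :=
      htendsF.comp tendsto_inv_nhdsGT_zero
    apply h1.congr'
    filter_upwards [self_mem_nhdsWithin] with h hh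
    rw [hF]
    simp only
    rw [div_eq_mul_inv, inv_inv, mul_comm]
  have hSne : S.Nonempty := by
    obtain ⟨g, hg⟩ := exists_supergrad hconc hpos (x := fun _ => (1:ℝ)) (fun i => one_pos)
    exact ⟨g k, (fun _ => (1:ℝ)), fun i => zero_le_one, g, hg, rfl⟩
  have hSbdd : BddBelow S := by
    refine ⟨0, ?_⟩
    rintro r ⟨x, hx, g, hg, rfl⟩
    exact supergrad_nonneg hpos hx hg k
  have hlow : ∀ r ∈ S, L ≤ r := by
    rintro r ⟨x, hx, g, hg, rfl⟩
    have hgnn : ∀ i, 0 ≤ g i := fun i => supergrad_nonneg hpos hx hg i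
    have key : ∀ t : ℝ, 1 ≤ t → L ≤ f x / t + g k := by
      intro t ht
      have ht0 : 0 < t := lt_of_lt_of_le one_pos ht
      have hLF : L ≤ F t := by
        have h1 := ciInf_le hbddA t
        rw [hA] at h1
        simp only at h1
        rw [max_eq_left ht] at h1
        exact h1
      have hy := hsm t ht0.le
      have h2 := hg (t • e) hy
      have hsum_le : ∑ i, g i * ((t • e) i - x i) ≤ g k * t := by
        have h3 : ∀ i, g i * ((t • e) i - x i) ≤ g i * (t • e) i := by
          intro i
          rw [mul_sub]
          exact sub_le_self _ (mul_nonneg (hgnn i) (hx i))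
        calc ∑ i, g i * ((t • e) i - x i) ≤ ∑ i, g i * (t • e) i :=
              Finset.sum_le_sum fun i _ => h3 i
          _ = g k * t := by
              rw [he]
              simp only [Pi.smul_apply, Pi.single_apply, smul_eq_mul, mul_ite,
                mul_one, mul_zero]
              simp [Finset.sum_ite_eq', mul_comm]
      have hFt : F t ≤ f x / t + g k := by
        rw [hF]
        simp only
        rw [div_le_iff₀ ht0]
        have heq : (f x / t + g k) * t = f x + g k * t := by field_simp
        rw [heq]
        linarith
      exact hLF.trans hFt
    have hlim : Tendsto (fun t : ℝ => f x / t + g k) atTop (𝓝 (0 + g k)) :=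
      (tendsto_const_nhds.div_atTop tendsto_id).add tendsto_const_nhds
    have h4 := ge_of_tendsto hlim (eventually_atTop.2 ⟨1, key⟩)
    simpa using h4
  have hL_le : L ≤ sInf S := le_csInf hSne hlow
  have hle_L : sInf S ≤ L := by
    by_contra hcon
    push_neg at hcon
    set ε : ℝ := (sInf S - L) / 2 with heps
    have hε0 : 0 < ε := by rw [heps]; linarith
    obtain ⟨t₀, ht₀⟩ := exists_lt_of_ciInf_lt
      (show (⨅ t, A t) < L + ε / 2 by rw [← hL]; linarith)
    set T : ℝ := max t₀ 1 with hT
    have hT1 : (1:ℝ) ≤ T := le_max_right _ _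
    have hT0 : (0:ℝ) < T := lt_of_lt_of_le one_pos hT1
    have hFT : F T < L + ε / 2 := by
      rw [hA] at ht₀
      exact ht₀
    have hTe : T • e ∈ {x : Fin N → ℝ | 0 ≤ x} := hsm T hT0.le
    have husc' := husc _ hTe (f (T • e) + ε / 2 * T) (by nlinarith)
    have hcurve : Tendsto (fun δ : ℝ => T • e + δ • (1 : Fin N → ℝ)) (𝓝[>] (0:ℝ))
        (𝓝[{x : Fin N → ℝ | 0 ≤ x}] (T • e)) := by
      rw [tendsto_nhdsWithin_iff]
      constructor
      · have hcont : Continuous (fun δ : ℝ => T • e + δ • (1 : Fin N → ℝ)) :=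
          continuous_const.add (continuous_id.smul continuous_const)
        have h5 := hcont.tendsto 0
        simp only [zero_smul, add_zero] at h5
        exact h5.mono_left nhdsWithin_le_nhds
      · filter_upwards [self_mem_nhdsWithin] with δ hδ
        intro j
        have h1 : (0:ℝ) ≤ T * e j := mul_nonneg hT0.le (by simpa using he0 j)
        have hδ0 : (0:ℝ) < δ := hδ
        simp only [Pi.add_apply, Pi.smul_apply, Pi.one_apply, smul_eq_mul, mul_one,
          Pi.zero_apply]
        linarith
    obtain ⟨δ, hδf, hδ0⟩ := ((hcurve.eventually husc').and self_mem_nhdsWithin).exists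
    set xx : Fin N → ℝ := T • e + δ • (1 : Fin N → ℝ) with hxx
    have hδpos : (0:ℝ) < δ := hδ0
    have hxxpos : ∀ i, 0 < xx i := by
      intro i
      have h1 : (0:ℝ) ≤ T * e i := mul_nonneg hT0.le (by simpa using he0 i)
      rw [hxx]
      simp only [Pi.add_apply, Pi.smul_apply, Pi.one_apply, smul_eq_mul, mul_one]
      linarith
    obtain ⟨g, hg⟩ := exists_supergrad hconc hpos hxxpos
    have hxx0 : (0:Fin N → ℝ) ≤ xx := fun i => (hxxpos i).le
    have hgnn : ∀ i, 0 ≤ g i := fun i => supergrad_nonneg hpos hxx0 hg i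
    have h0 := hg 0 (le_refl _)
    have hsum2 : ∑ i, g i * ((0:Fin N → ℝ) i - xx i) ≤ -(g k * T) := by
      have h1 : ∑ i, g i * ((0:Fin N → ℝ) i - xx i) = -∑ i, g i * xx i := by
        rw [← Finset.sum_neg_distrib]
        apply Finset.sum_congr rfl
        intro i _
        simp only [Pi.zero_apply, zero_sub, mul_neg]
      rw [h1, neg_le_neg_iff]
      have h2 : g k * xx k ≤ ∑ i, g i * xx i :=
        Finset.single_le_sum (fun i _ => mul_nonneg (hgnn i) (hxx0 i))
          (Finset.mem_univ k)
      have h3 : xx k = T + δ := by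
        rw [hxx, he]
        simp [Pi.single_apply]
      have h4 : g k * T ≤ g k * xx k := by
        rw [h3]
        exact mul_le_mul_of_nonneg_left (by linarith) (hgnn k)
      linarith
    have hfxx : f xx < f (T • e) + ε / 2 * T := hδf
    have hf0 : 0 < f 0 := hpos 0 (le_refl _)
    have hgkT : g k * T < f xx := by
      have h5 : f 0 ≤ f xx + ∑ i, g i * ((0:Fin N → ℝ) i - xx i) := h0
      linarith
    have hFTmul : F T * T = f (T • e) := by
      rw [hF]
      simp only
      exact div_mul_cancel₀ _ hT0.ne'
    have hgk : g k < L + ε := by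
      have h6 : g k * T < (L + ε) * T := by
        have h7 : f (T • e) = F T * T := hFTmul.symm
        nlinarith
      exact lt_of_mul_lt_mul_right h6 hT0.le
    have hmemS : g k ∈ S := ⟨xx, hxx0, g, hg, rfl⟩
    have h8 : sInf S ≤ g k := csInf_le hSbdd hmemS
    rw [heps] at hgk
    linarith
  have hgL : gstar = L := by
    rw [hgstar]
    exact le_antisymm hle_L hL_le
  rw [hgL]
  exact ⟨hL0, htendphi⟩
end
end

section
/- Let f : ℝ₊^N → ℝ₊₊ be an upper semicontinuous concave function, let x ∈ ℝ₊^N and k ∈ {1,…,N}, assume that ∂f(x + h·e_k) is nonempty for every h ≥ 0, and let h ↦ g(x + h·e_k) ∈ ∂f(x + h·e_k) be any selection of supergradients. Then lim_{h → ∞} g_k(x + h·e_k) = g_k* ≥ 0, where g_k* := inf{ u_k : u ∈ ⋃_{y ∈ ℝ₊^N} ∂f(y) } and g_k(x + h·e_k) denotes the k-th component of g(x + h·e_k). -/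
open Matrix Filter Topology

noncomputable section

lemma sum_mul_single {N : ℕ} (k : Fin N) (v : Fin N → ℝ) (h : ℝ) :
    ∑ i, v i * (h * (Pi.single k 1 : Fin N → ℝ) i) = v k * h := by
  simp [Pi.single_apply, mul_ite, Finset.sum_ite_eq', mul_comm]

lemma sum_mul_sub_shift {N : ℕ} (k : Fin N) (v x y : Fin N → ℝ) (h : ℝ) :
    ∑ i, v i * ((x + h • (Pi.single k 1 : Fin N → ℝ)) i - y i)
      = (∑ i, v i * (x i - y i)) + v k * h := by
  have : ∀ i : Fin N, v i * ((x + h • (Pi.single k 1 : Fin N → ℝ)) i - y i)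
      = v i * (x i - y i) + v i * (h * (Pi.single k 1 : Fin N → ℝ) i) := by
    intro i; simp [Pi.add_apply, Pi.smul_apply, smul_eq_mul]; ring
  rw [Finset.sum_congr rfl (fun i _ => this i), Finset.sum_add_distrib,
    sum_mul_single]

/-- Any selection of supergradients along the direction e_k has its k-th component
converging, as h → ∞, to the infimum of the k-th components of all supergradients. -/
theorem supergradient_selection_tendsto_inf {N : ℕ} (f : (Fin N → ℝ) → ℝ)
    (hconc : ConcaveOn ℝ {x : Fin N → ℝ | 0 ≤ x} f)
    (husc : UpperSemicontinuousOn f {x : Fin N → ℝ | 0 ≤ x})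
    (hpos : ∀ x : Fin N → ℝ, 0 ≤ x → 0 < f x)
    (x : Fin N → ℝ) (hx : 0 ≤ x) (k : Fin N)
    (g : ℝ → Fin N → ℝ)
    (hg : ∀ h : ℝ, 0 ≤ h →
      IsSupergrad f (x + h • (Pi.single k 1 : Fin N → ℝ)) (g h))
    (gstar : ℝ)
    (hgstar : gstar =
      sInf {t : ℝ | ∃ y : Fin N → ℝ, 0 ≤ y ∧
        ∃ u : Fin N → ℝ, IsSupergrad f y u ∧ u k = t}) :
    0 ≤ gstar ∧ Tendsto (fun h : ℝ => g h k) atTop (𝓝 gstar) := by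
  classical
  set S : Set ℝ := {t : ℝ | ∃ y : Fin N → ℝ, 0 ≤ y ∧
      ∃ u : Fin N → ℝ, IsSupergrad f y u ∧ u k = t} with hSdef
  -- shifted points are in the orthant
  have hsingle : ∀ i : Fin N, 0 ≤ (Pi.single k 1 : Fin N → ℝ) i := by
    intro i
    rcases eq_or_ne i k with rfl | hne
    · simp
    · simp [Pi.single_apply, hne]
  have hshift : ∀ (y : Fin N → ℝ), 0 ≤ y → ∀ h : ℝ, 0 ≤ h →
      (0 : Fin N → ℝ) ≤ y + h • (Pi.single k 1 : Fin N → ℝ) := by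
    intro y hy h hh i
    have h1 := hy i
    have h2 := hsingle i
    have : 0 ≤ h * (Pi.single k 1 : Fin N → ℝ) i := mul_nonneg hh h2
    simpa [Pi.add_apply, Pi.smul_apply, smul_eq_mul] using add_nonneg h1 this
  -- every element of S is nonnegative
  have hnonneg : ∀ t ∈ S, (0:ℝ) ≤ t := by
    rintro t ⟨y, hy, u, hu, rfl⟩
    by_contra hneg
    push_neg at hneg
    set c : ℝ := (f y + 1) / (-(u k)) with hc
    have hfy : 0 < f y := hpos y hy
    have hcpos : 0 < c := div_pos (by linarith) (by linarith)
    have hz : (0 : Fin N → ℝ) ≤ y + c • (Pi.single k 1 : Fin N → ℝ) :=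
      hshift y hy c hcpos.le
    have hineq := hu (y + c • (Pi.single k 1 : Fin N → ℝ)) hz
    have hsum : ∑ i, u i * ((y + c • (Pi.single k 1 : Fin N → ℝ)) i - y i)
        = u k * c := by
      have := sum_mul_sub_shift k u y y c
      simpa using this
    rw [hsum] at hineq
    have hval : u k * c = -(f y + 1) := by
      have hne0 : u k ≠ 0 := ne_of_lt hneg
      rw [hc]
      field_simp
    have := hpos _ hz
    rw [hval] at hineq
    linarith
  have hne : S.Nonempty := by
    refine ⟨g 0 k, x + (0:ℝ) • (Pi.single k 1 : Fin N → ℝ),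
      hshift x hx 0 le_rfl, g 0, hg 0 le_rfl, rfl⟩
  have hbdd : BddBelow S := ⟨0, fun t ht => hnonneg t ht⟩
  have hmem : ∀ h : ℝ, 0 ≤ h → g h k ∈ S := by
    intro h hh
    exact ⟨x + h • (Pi.single k 1 : Fin N → ℝ), hshift x hx h hh, g h, hg h hh, rfl⟩
  have hgstar_le : ∀ h : ℝ, 0 ≤ h → gstar ≤ g h k := by
    intro h hh
    rw [hgstar]
    exact csInf_le hbdd (hmem h hh)
  have h0 : 0 ≤ gstar := by
    rw [hgstar]
    exact le_csInf hne hnonneg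
  refine ⟨h0, ?_⟩
  rw [Metric.tendsto_atTop]
  intro ε hε
  -- pick a supergradient whose k-component is within ε/2 of the infimum
  have hlt : sInf S < gstar + ε / 2 := by rw [← hgstar]; linarith
  obtain ⟨s, hsS, hs⟩ := (csInf_lt_iff hbdd hne).mp hlt
  obtain ⟨y, hy, u, hu, huk⟩ := hsS
  set C : ℝ := f y + (∑ i, u i * (x i - y i)) - f x with hC
  refine ⟨max 1 (2 * |C| / ε), fun h hh => ?_⟩
  have hh1 : (1:ℝ) ≤ h := le_trans (le_max_left _ _) hh
  have hhpos : (0:ℝ) < h := by linarith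
  have hh2 : 2 * |C| / ε ≤ h := le_trans (le_max_right _ _) hh
  -- the key bound : g h k ≤ u k + C / h
  have key : g h k ≤ u k + C / h := by
    -- supergradient at x + h e_k evaluated at x
    have i1 := hg h hhpos.le x hx
    have s1 : ∑ i, g h i * (x i - (x + h • (Pi.single k 1 : Fin N → ℝ)) i)
        = -(g h k * h) := by
      have e : ∀ i : Fin N,
          g h i * (x i - (x + h • (Pi.single k 1 : Fin N → ℝ)) i)
          = -(g h i * ((x + h • (Pi.single k 1 : Fin N → ℝ)) i - x i)) := by
        intro i; ring
      rw [Finset.sum_congr rfl (fun i _ => e i), Finset.sum_neg_distrib,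
        sum_mul_sub_shift k (g h) x x h]
      simp
    rw [s1] at i1
    -- supergradient at y evaluated at x + h e_k
    have i2 := hu (x + h • (Pi.single k 1 : Fin N → ℝ)) (hshift x hx h hhpos.le)
    rw [sum_mul_sub_shift k u x y h] at i2
    -- combine : g h k * h ≤ C + u k * h
    have hcomb : g h k * h ≤ C + u k * h := by
      rw [hC]; linarith
    have hdiv : (C / h) * h = C := div_mul_cancel₀ C (ne_of_gt hhpos)
    have : g h k * h ≤ (u k + C / h) * h := by nlinarith
    exact le_of_mul_le_mul_right this hhpos
  have hCh : C / h ≤ ε / 2 := by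
    have h1 : C ≤ |C| := le_abs_self C
    have h2 : 2 * |C| ≤ h * ε := by
      rw [div_le_iff₀ hε] at hh2
      linarith
    rw [div_le_iff₀ hhpos]
    nlinarith [abs_nonneg C]
  have hlow : gstar ≤ g h k := hgstar_le h hhpos.le
  have hup : g h k < gstar + ε := by
    have : u k < gstar + ε / 2 := by rw [huk]; exact hs
    linarith
  rw [Real.dist_eq]
  rw [abs_lt]
  constructor <;> linarith
end
end

section
/- Let T : ℝ₊^N → ℝ₊₊^N be a positive concave mapping with a fixed point (there exists x ∈ ℝ₊^N with T(x) = x), and let M be its lower bounding matrix. Then the matrix I − M is invertible and its inverse (I − M)⁻¹ is a nonnegative matrix (all entries are ≥ 0). -/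
open Matrix Filter Topology

noncomputable section

/-- `M` is the lower bounding matrix of the positive concave mapping with components `f i`:
`M i k` is the infimum of the `k`-th components of all supergradients of `f i` at points of
the nonnegative orthant. -/
def IsLBM {N : ℕ} (f : Fin N → (Fin N → ℝ) → ℝ) (M : Matrix (Fin N) (Fin N) ℝ) : Prop :=
  ∀ i k, M i k =
    sInf {t : ℝ | ∃ x : Fin N → ℝ, 0 ≤ x ∧ ∃ g : Fin N → ℝ, IsSupergrad (f i) x g ∧ g k = t}

/-- The spectral radius of a real matrix: the supremum of the moduli of its complex
eigenvalues. -/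
def specRad {N : ℕ} (M : Matrix (Fin N) (Fin N) ℝ) : ENNReal :=
  spectralRadius ℂ (M.map (algebraMap ℝ ℂ))

lemma supergrad_comp_nonneg {N : ℕ} {f : (Fin N → ℝ) → ℝ}
    (hpos : ∀ y : Fin N → ℝ, 0 ≤ y → 0 < f y) {z g : Fin N → ℝ} (hz : 0 ≤ z)
    (hg : IsSupergrad f z g) (k : Fin N) : 0 ≤ g k := by
  by_contra h
  push_neg at h
  set c : ℝ := (f z + 1) / (-g k) with hc
  have hfz : 0 < f z := hpos z hz
  have hc0 : 0 < c := div_pos (by linarith) (by linarith)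
  set y : Fin N → ℝ := fun j => z j + (if j = k then c else 0) with hy
  have hy0 : 0 ≤ y := by
    intro j
    have := hz j
    dsimp [y]
    split <;> simp_all <;> linarith [div_pos (by linarith : (0:ℝ) < f z + 1) (neg_pos.mpr h)]
  have h1 := hg y hy0
  have h2 : ∑ i, g i * (y i - z i) = g k * c := by
    have : ∀ i, g i * (y i - z i) = if i = k then g k * c else 0 := by
      intro i; dsimp [y]; split <;> simp_all
    rw [Finset.sum_congr rfl fun i _ => this i, Finset.sum_ite_eq' Finset.univ k (fun _ => g k * c)]
    simp
  have h3 : g k * c = -(f z + 1) := by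
    rw [hc, mul_div_assoc']
    rw [div_eq_iff (by linarith : -g k ≠ 0)]
    ring
  have h4 := hpos y hy0
  rw [h2, h3] at h1
  linarith

lemma exists_supergrad_interior {N : ℕ} (f : (Fin N → ℝ) → ℝ)
    (hconc : ConcaveOn ℝ {x : Fin N → ℝ | 0 ≤ x} f)
    (hpos : ∀ y : Fin N → ℝ, 0 ≤ y → 0 < f y)
    (x : Fin N → ℝ) (hx : ∀ i, 0 < x i) : ∃ g, IsSupergrad f x g := by
  classical
  set K : Set ((Fin N → ℝ) × ℝ) := {p | p.1 ∈ {w : Fin N → ℝ | 0 ≤ w} ∧ p.2 ≤ f p.1} with hKdef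
  have hK : Convex ℝ K := hconc.convex_hypograph
  set z : (Fin N → ℝ) × ℝ := (x, -1) with hzdef
  have hU : IsOpen {p : (Fin N → ℝ) × ℝ | (∀ i, 0 < p.1 i) ∧ p.2 < 0} := by
    have h1 : IsOpen {p : (Fin N → ℝ) × ℝ | ∀ i, 0 < p.1 i} := by
      have he : {p : (Fin N → ℝ) × ℝ | ∀ i, 0 < p.1 i} = ⋂ i, {p | 0 < p.1 i} := by
        ext p; simp
      rw [he]
      exact isOpen_iInter_of_finite fun i =>
        isOpen_lt continuous_const ((continuous_apply i).comp continuous_fst)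
    exact h1.inter (isOpen_lt continuous_snd continuous_const)
  have hsub : {p : (Fin N → ℝ) × ℝ | (∀ i, 0 < p.1 i) ∧ p.2 < 0} ⊆ K := by
    rintro p ⟨h1, h2⟩
    have hp1 : (0 : Fin N → ℝ) ≤ p.1 := fun i => (h1 i).le
    exact ⟨hp1, h2.le.trans (hpos _ hp1).le⟩
  have hzK : z ∈ interior K :=
    interior_maximal hsub hU ⟨hx, by norm_num⟩
  have hpK : ((x, f x) : (Fin N → ℝ) × ℝ) ∉ interior K := by
    intro h
    have hnhds : K ∈ 𝓝 ((x, f x) : (Fin N → ℝ) × ℝ) := mem_interior_iff_mem_nhds.mp h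
    obtain ⟨ε, hε, hball⟩ := Metric.mem_nhds_iff.mp hnhds
    have hq : ((x, f x + ε/2) : (Fin N → ℝ) × ℝ) ∈ Metric.ball ((x, f x) : (Fin N → ℝ) × ℝ) ε := by
      rw [Metric.mem_ball, Prod.dist_eq]
      simp only [dist_self]
      rw [Real.dist_eq, show f x + ε/2 - f x = ε/2 by ring, abs_of_pos (by linarith),
        max_eq_right (by linarith)]
      linarith
    have := (hball hq).2
    simp only at this
    linarith
  obtain ⟨φ, hφ⟩ := geometric_hahn_banach_open_point hK.interior isOpen_interior hpK
  have hle : ∀ a ∈ K, φ a ≤ φ ((x, f x) : (Fin N → ℝ) × ℝ) := by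
    intro a ha
    by_contra h
    push_neg at h
    have hz' := hφ z hzK
    have hd0 : 0 < φ a - φ z := by linarith
    set θ : ℝ := min 1 ((φ a - φ ((x, f x) : (Fin N → ℝ) × ℝ)) / (2 * (φ a - φ z))) with hθdef
    have hθ0 : 0 < θ := lt_min one_pos (div_pos (by linarith) (by linarith))
    have hθ1 : θ ≤ 1 := min_le_left _ _
    have hmem : θ • z + (1 - θ) • a ∈ interior K :=
      hK.combo_interior_self_mem_interior hzK ha hθ0 (by linarith) (by ring)
    have hlt := hφ _ hmem
    rw [map_add, φ.map_smul, φ.map_smul] at hlt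
    simp only [smul_eq_mul] at hlt
    have hθ2 : θ ≤ (φ a - φ ((x, f x) : (Fin N → ℝ) × ℝ)) / (2 * (φ a - φ z)) := min_le_right _ _
    have h2 : θ * (φ a - φ z) ≤ (φ a - φ ((x, f x) : (Fin N → ℝ) × ℝ)) / (2 * (φ a - φ z)) * (φ a - φ z) :=
      mul_le_mul_of_nonneg_right hθ2 hd0.le
    have h3 : (φ a - φ ((x, f x) : (Fin N → ℝ) × ℝ)) / (2 * (φ a - φ z)) * (φ a - φ z)
        = (φ a - φ ((x, f x) : (Fin N → ℝ) × ℝ)) / 2 := by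
      field_simp
    rw [h3] at h2
    nlinarith
  set b : ℝ := φ ((0 : Fin N → ℝ), (1:ℝ)) with hbdef
  have hsplit : ∀ (y : Fin N → ℝ) (t : ℝ), φ (y, t) = φ (y, (0:ℝ)) + t * b := by
    intro y t
    have heq : ((y, t) : (Fin N → ℝ) × ℝ) = (y, (0:ℝ)) + t • ((0 : Fin N → ℝ), (1:ℝ)) := by
      simp [Prod.ext_iff]
    rw [heq, map_add, φ.map_smul, smul_eq_mul]
  have hbpos : 0 < b := by
    have h1 := hφ z hzK
    rw [hzdef] at h1
    rw [hsplit x (-1), hsplit x (f x)] at h1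
    have hfx := hpos x (fun i => (hx i).le)
    nlinarith
  refine ⟨fun k => -(φ ((Pi.single k 1 : Fin N → ℝ), (0:ℝ))) / b, ?_⟩
  intro y hy
  have hyK : ((y, f y) : (Fin N → ℝ) × ℝ) ∈ K := ⟨hy, le_refl _⟩
  have h2 := hle _ hyK
  rw [hsplit y (f y), hsplit x (f x)] at h2
  have hlin : ∀ w : Fin N → ℝ, φ (w, (0:ℝ)) = ∑ k, w k * φ ((Pi.single k 1 : Fin N → ℝ), (0:ℝ)) := by
    intro w
    have hw : ((w, (0:ℝ)) : (Fin N → ℝ) × ℝ) = ∑ k, w k • ((Pi.single k 1 : Fin N → ℝ), (0:ℝ)) := by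
      rw [Prod.ext_iff]
      constructor
      · rw [Prod.fst_sum]
        simp only [Prod.smul_mk]
        have : ∀ k, w k • (Pi.single k 1 : Fin N → ℝ) = Pi.single k (w k) := by
          intro k
          rw [← Pi.single_smul, smul_eq_mul, mul_one]
        simp only [this]
        exact (Finset.univ_sum_single w).symm
      · rw [Prod.snd_sum]
        simp
    rw [hw, map_sum]
    refine Finset.sum_congr rfl fun k _ => ?_
    rw [φ.map_smul, smul_eq_mul]
  have key : ∑ k, -(φ ((Pi.single k 1 : Fin N → ℝ), (0:ℝ))) / b * (y k - x k)
      = (φ (x, (0:ℝ)) - φ (y, (0:ℝ))) / b := by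
    rw [hlin x, hlin y, ← Finset.sum_sub_distrib, Finset.sum_div]
    apply Finset.sum_congr rfl
    intro k _
    field_simp
    ring
  rw [key]
  have hfin : f y - f x ≤ (φ (x, (0:ℝ)) - φ (y, (0:ℝ))) / b := by
    rw [le_div_iff₀ hbpos]
    nlinarith
  linarith
lemma core_nonneg {N : ℕ} (M : Matrix (Fin N) (Fin N) ℝ) (x c u b : Fin N → ℝ)
    (hM0 : ∀ i k, 0 ≤ M i k) (hx : ∀ i, 0 < x i) (hc : ∀ i, 0 < c i)
    (hMx : ∀ i, ∑ j, M i j * x j ≤ x i - c i)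
    (hu : ∀ i, u i = b i + ∑ j, M i j * u j) (hb : ∀ i, 0 ≤ b i) :
    ∀ i, 0 ≤ u i := by
  intro i
  by_contra hneg
  push_neg at hneg
  obtain ⟨i₀, -, hmin⟩ := Finset.exists_min_image Finset.univ (fun j => u j / x j)
    ⟨i, Finset.mem_univ i⟩
  have hr : u i₀ / x i₀ < 0 :=
    lt_of_le_of_lt (hmin i (Finset.mem_univ i)) (div_neg_of_neg_of_pos hneg (hx i))
  set r := u i₀ / x i₀ with hrdef
  have hru : ∀ j, r * x j ≤ u j := by
    intro j
    have h := hmin j (Finset.mem_univ j)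
    exact (le_div_iff₀ (hx j)).mp h
  have h1 : ∑ j, M i₀ j * (r * x j) ≤ ∑ j, M i₀ j * u j :=
    Finset.sum_le_sum fun j _ => mul_le_mul_of_nonneg_left (hru j) (hM0 i₀ j)
  have h2 : ∑ j, M i₀ j * (r * x j) = r * ∑ j, M i₀ j * x j := by
    rw [Finset.mul_sum]
    exact Finset.sum_congr rfl fun j _ => by ring
  have h3 : r * (x i₀ - c i₀) ≤ r * ∑ j, M i₀ j * x j := by
    apply mul_le_mul_of_nonpos_left (hMx i₀) hr.le
  have hui₀ : u i₀ = r * x i₀ := by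
    rw [hrdef, div_mul_cancel₀ _ (hx i₀).ne']
  have h4 := hu i₀
  have hexp : r * (x i₀ - c i₀) = r * x i₀ - r * c i₀ := by ring
  have hpos' : 0 < -(r * c i₀) := by
    rw [← neg_mul]
    exact mul_pos (neg_pos.mpr hr) (hc i₀)
  linarith [hb i₀]

/-- If a positive concave mapping has a fixed point, then I − M is invertible and its
inverse is a nonnegative matrix, where M is the lower bounding matrix. -/
theorem inv_one_sub_lbm_nonneg_of_fixed_point {N : ℕ} (f : Fin N → (Fin N → ℝ) → ℝ)
    (hconc : ∀ i, ConcaveOn ℝ {x : Fin N → ℝ | 0 ≤ x} (f i))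
    (husc : ∀ i, UpperSemicontinuousOn (f i) {x : Fin N → ℝ | 0 ≤ x})
    (hpos : ∀ i, ∀ x : Fin N → ℝ, 0 ≤ x → 0 < f i x)
    (M : Matrix (Fin N) (Fin N) ℝ) (hM : IsLBM f M)
    (x : Fin N → ℝ) (hx : 0 ≤ x) (hfix : (fun i => f i x) = x) :
    IsUnit (1 - M) ∧ ∀ i k, 0 ≤ (1 - M)⁻¹ i k := by
  have hxpos : ∀ i, 0 < x i := fun i => (congrFun hfix i) ▸ hpos i x hx
  have hM0 : ∀ i k, 0 ≤ M i k := by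
    intro i k
    rw [hM i k]
    apply Real.sInf_nonneg
    rintro t ⟨z, hz, g, hg, rfl⟩
    exact supergrad_comp_nonneg (hpos i) hz hg k
  have hMx : ∀ i, ∑ j, M i j * x j ≤ x i - f i 0 := by
    intro i
    obtain ⟨g, hg⟩ := exists_supergrad_interior (f i) (hconc i) (hpos i) x hxpos
    have hMg : ∀ k, M i k ≤ g k := by
      intro k
      rw [hM i k]
      apply csInf_le
      · refine ⟨0, ?_⟩
        rintro t ⟨z, hz, g', hg', rfl⟩
        exact supergrad_comp_nonneg (hpos i) hz hg' k
      · exact ⟨x, hx, g, hg, rfl⟩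
    have h1 : ∑ j, M i j * x j ≤ ∑ j, g j * x j :=
      Finset.sum_le_sum fun j _ => mul_le_mul_of_nonneg_right (hMg j) (hxpos j).le
    have h2 := hg 0 le_rfl
    have h3 : ∑ j, g j * ((0 : Fin N → ℝ) j - x j) = -∑ j, g j * x j := by
      rw [← Finset.sum_neg_distrib]
      exact Finset.sum_congr rfl fun j _ => by rw [Pi.zero_apply]; ring
    rw [h3] at h2
    have hfx : f i x = x i := congrFun hfix i
    linarith
  have hc : ∀ i, 0 < f i 0 := fun i => hpos i 0 le_rfl
  -- entries of (1 - M) applied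
  have hmv : ∀ u : Fin N → ℝ, ∀ i, ((1 - M) *ᵥ u) i = u i - ∑ j, M i j * u j := by
    intro u i
    simp only [Matrix.mulVec, dotProduct, Matrix.sub_apply, Matrix.one_apply, sub_mul]
    rw [Finset.sum_sub_distrib]
    congr 1
    simp [Finset.sum_ite_eq]
  have hdet : (1 - M).det ≠ 0 := by
    intro h
    obtain ⟨v, hv0, hv⟩ := Matrix.exists_mulVec_eq_zero_iff.mpr h
    have key : ∀ (w : Fin N → ℝ), (∀ i, w i = ∑ j, M i j * w j) → ∀ i, 0 ≤ w i := by
      intro w hw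
      exact core_nonneg M x (fun i => f i 0) w 0 hM0 hxpos hc hMx
        (fun i => by simpa using hw i) (fun i => le_rfl)
    have hveq : ∀ i, v i = ∑ j, M i j * v j := by
      intro i
      have := congrFun hv i
      rw [hmv v i] at this
      simp only [Pi.zero_apply] at this
      linarith
    have h1 := key v hveq
    have h2 := key (-v) (fun i => by
      simp only [Pi.neg_apply]
      rw [hveq i, ← Finset.sum_neg_distrib]
      exact Finset.sum_congr rfl fun j _ => by ring)
    apply hv0
    funext i
    have ha := h1 i
    have hb' := h2 i
    simp only [Pi.neg_apply] at hb'
    have hz : v i = 0 := le_antisymm (by linarith) ha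
    simpa using hz
  have hUnit : IsUnit (1 - M) := (Matrix.isUnit_iff_isUnit_det _).mpr (isUnit_iff_ne_zero.mpr hdet)
  refine ⟨hUnit, ?_⟩
  intro i k
  have hinv : (1 - M) * (1 - M)⁻¹ = 1 :=
    Matrix.mul_nonsing_inv _ ((Matrix.isUnit_iff_isUnit_det _).mp hUnit)
  set u : Fin N → ℝ := fun j => (1 - M)⁻¹ j k with hudef
  have hcol : ∀ j, u j = (if j = k then (1:ℝ) else 0) + ∑ l, M j l * u l := by
    intro j
    have := congrFun (congrFun hinv j) k
    rw [Matrix.mul_apply] at this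
    have hmm : ∑ l, (1 - M) j l * (1 - M)⁻¹ l k = u j - ∑ l, M j l * u l := by
      have := hmv u j
      rw [Matrix.mulVec, dotProduct] at this
      exact this
    rw [hmm, Matrix.one_apply] at this
    by_cases hjk : j = k
    · simp only [hjk, if_true] at this ⊢
      linarith
    · simp only [hjk, if_false] at this ⊢
      linarith
  have := core_nonneg M x (fun i => f i 0) u (fun j => if j = k then (1:ℝ) else 0)
    hM0 hxpos hc hMx hcol (fun j => by
      show (0:ℝ) ≤ if j = k then 1 else 0
      split <;> norm_num)
  exact this i
end
end

section
/- Let T : ℝ₊^N → ℝ₊₊^N be a positive concave mapping whose lower bounding matrix M satisfies ρ(M) < 1, and assume there exists y ∈ ℝ₊₊^N such that T(x) ≤ y + M·x componentwise for every x ∈ ℝ₊^N. Then T has a fixed point: there exists x* ∈ ℝ₊₊^N with T(x*) = x*. -/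
open Matrix Filter Topology
open scoped NNReal ENNReal

noncomputable section

section Aux

attribute [local instance] Matrix.linftyOpSeminormedAddCommGroup Matrix.linftyOpNormedRing
  Matrix.linftyOpNormedAlgebra

/-- A positive concave function on the nonnegative orthant is nondecreasing. -/
lemma mono_of_concave_pos {N : ℕ} {f : (Fin N → ℝ) → ℝ}
    (hconc : ConcaveOn ℝ {x : Fin N → ℝ | 0 ≤ x} f)
    (hpos : ∀ x : Fin N → ℝ, 0 ≤ x → 0 < f x)
    {a b : Fin N → ℝ} (ha : 0 ≤ a) (hab : a ≤ b) : f a ≤ f b := by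
  have hb : 0 ≤ b := le_trans ha hab
  by_contra hcon
  push_neg at hcon
  have hfa : 0 < f a := hpos a ha
  have hfb : 0 < f b := hpos b hb
  set t : ℝ := (f a - f b) / (2 * f a) with ht
  have ht0 : 0 < t := div_pos (by linarith) (by linarith)
  have ht1 : t < 1 := by
    rw [div_lt_one (by linarith)]; linarith
  set z : Fin N → ℝ := a + t⁻¹ • (b - a) with hz
  have hz0 : 0 ≤ z := by
    intro i
    have h1 : a i ≤ b i := hab i
    have h2 : (0:ℝ) ≤ a i := ha i
    have h3 : (0:ℝ) ≤ t⁻¹ := le_of_lt (inv_pos.mpr ht0)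
    have : (0:ℝ) ≤ a i + t⁻¹ * (b i - a i) :=
      add_nonneg h2 (mul_nonneg h3 (by linarith))
    simpa [hz] using this
  have hcomb : (1 - t) • a + t • z = b := by
    funext i
    have htne : t ≠ 0 := ne_of_gt ht0
    simp only [hz, Pi.add_apply, Pi.smul_apply, Pi.sub_apply, smul_eq_mul]
    field_simp
    ring
  have hkey := hconc.2 (Set.mem_setOf.mpr ha) (Set.mem_setOf.mpr hz0)
    (by linarith : (0:ℝ) ≤ 1 - t) ht0.le (by ring)
  rw [hcomb] at hkey
  have hfz : 0 < f z := hpos z hz0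
  simp only [smul_eq_mul] at hkey
  have htfa : t * f a = (f a - f b) / 2 := by
    rw [ht]; field_simp
  nlinarith [mul_pos ht0 hfz]

/-- Any supergradient of a positive function on the orthant is componentwise nonnegative,
hence so is the lower bounding matrix. -/
lemma lbm_nonneg {N : ℕ} {f : Fin N → (Fin N → ℝ) → ℝ}
    (hpos : ∀ i, ∀ x : Fin N → ℝ, 0 ≤ x → 0 < f i x)
    {M : Matrix (Fin N) (Fin N) ℝ} (hM : IsLBM f M) : ∀ i k, 0 ≤ M i k := by
  intro i k
  rw [hM i k]
  apply Real.sInf_nonneg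
  rintro t ⟨x, hx, g, hg, rfl⟩
  by_contra hneg
  push_neg at hneg
  have hgk : 0 < -(g k) := by linarith
  set s : ℝ := (f i x + 1) / (-(g k)) with hs
  set p : Fin N → ℝ := Pi.single k s with hp
  have hfx : 0 < f i x := hpos i x hx
  have hs0 : 0 ≤ s := le_of_lt (div_pos (by linarith) hgk)
  have hy : (0 : Fin N → ℝ) ≤ x + p := by
    intro j
    have h1 : (0:ℝ) ≤ p j := by
      rcases eq_or_ne j k with rfl | h
      · simpa [hp] using hs0
      · simp [hp, Pi.single_eq_of_ne h]
    have h2 : (0:ℝ) ≤ x j := hx j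
    have : (0:ℝ) ≤ x j + p j := add_nonneg h2 h1
    simpa using this
  have hsum : ∑ j, g j * ((x + p) j - x j) = g k * s := by
    simp [hp, Pi.single_apply, mul_ite, Finset.sum_ite_eq']
  have hle := hg (x + p) hy
  rw [hsum] at hle
  have h3 : 0 < f i (x + p) := hpos i _ hy
  have h4 : g k * s = -(f i x + 1) := by
    have hne : g k ≠ 0 := ne_of_lt hneg
    rw [hs]
    field_simp
  linarith

lemma pow_entry_nonneg {N : ℕ} {M : Matrix (Fin N) (Fin N) ℝ} (hM : ∀ i k, 0 ≤ M i k) :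
    ∀ n i k, 0 ≤ (M ^ n) i k := by
  intro n
  induction n with
  | zero =>
    intro i k
    simp only [pow_zero, Matrix.one_apply]
    split <;> norm_num
  | succ n ih =>
    intro i k
    rw [pow_succ, Matrix.mul_apply]
    exact Finset.sum_nonneg fun j _ => mul_nonneg (ih i j) (hM j k)

lemma map_pow_nnnorm_eq {N : ℕ} (B : Matrix (Fin N) (Fin N) ℝ) :
    ‖B.map (algebraMap ℝ ℂ)‖₊ = ‖B‖₊ := by
  rw [Matrix.linfty_opNNNorm_def, Matrix.linfty_opNNNorm_def]
  congr 1
  funext i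
  congr 1
  funext j
  simp [Matrix.map_apply]

/-- Neumann-series construction: if `M ≥ 0` has spectral radius `< 1` and `y ≥ 0`,
there is `u ≥ y` with `u = y + M u`. -/
lemma exists_affine_fixed {N : ℕ} (M : Matrix (Fin N) (Fin N) ℝ)
    (hMnn : ∀ i k, 0 ≤ M i k) (hrad : specRad M < 1)
    (y : Fin N → ℝ) (hy : ∀ i, 0 ≤ y i) :
    ∃ u : Fin N → ℝ, (∀ i, y i ≤ u i) ∧ ∀ i, y i + (M *ᵥ u) i = u i := by
  classical
  set A := M.map (algebraMap ℝ ℂ) with hA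
  have hgel := spectrum.pow_nnnorm_pow_one_div_tendsto_nhds_spectralRadius A
  obtain ⟨r, hr1, hr2⟩ := exists_between hrad
  have hrne : r ≠ ⊤ := hr2.ne_top
  set c : ℝ≥0 := r.toNNReal with hc
  have hcr : (c : ℝ≥0∞) = r := ENNReal.coe_toNNReal hrne
  have hc1 : c < 1 := by
    rw [← ENNReal.coe_lt_one_iff, hcr]; exact hr2
  have hev : ∀ᶠ n : ℕ in atTop, (‖A ^ n‖₊ : ℝ≥0∞) ^ (1 / (n:ℝ)) < r :=
    hgel.eventually_lt_const hr1
  have hApow : ∀ n : ℕ, A ^ n = (M ^ n).map (algebraMap ℝ ℂ) := by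
    intro n
    have h : A = (algebraMap ℝ ℂ).mapMatrix M := rfl
    rw [h, ← map_pow, RingHom.mapMatrix_apply]
  have hbound : ∀ᶠ n in atTop, ‖M ^ n‖ ≤ (c:ℝ) ^ n := by
    filter_upwards [hev, eventually_ge_atTop 1] with n hn hn1
    have hnne : (n:ℝ) ≠ 0 := by
      exact_mod_cast Nat.one_le_iff_ne_zero.mp hn1
    have hx : ((‖A ^ n‖₊ : ℝ≥0∞) ^ (1 / (n:ℝ))) ^ (n:ℝ) = (‖A ^ n‖₊ : ℝ≥0∞) := by
      rw [← ENNReal.rpow_mul, one_div, inv_mul_cancel₀ hnne, ENNReal.rpow_one]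
    have h1 : (‖A ^ n‖₊ : ℝ≥0∞) ≤ (c : ℝ≥0∞) ^ (n:ℝ) := by
      calc (‖A ^ n‖₊ : ℝ≥0∞) = ((‖A ^ n‖₊ : ℝ≥0∞) ^ (1 / (n:ℝ))) ^ (n:ℝ) := hx.symm
        _ ≤ (r : ℝ≥0∞) ^ (n:ℝ) := ENNReal.rpow_le_rpow hn.le (Nat.cast_nonneg n)
        _ = (c : ℝ≥0∞) ^ (n:ℝ) := by rw [hcr]
    rw [ENNReal.rpow_natCast, ← ENNReal.coe_pow, ENNReal.coe_le_coe] at h1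
    have h2 : ‖M ^ n‖₊ ≤ c ^ n := by
      rw [← map_pow_nnnorm_eq (M ^ n), ← hApow n]; exact h1
    exact_mod_cast h2
  have hgeom : Summable fun n : ℕ => ‖y‖ * (c:ℝ) ^ n :=
    (summable_geometric_of_lt_one c.coe_nonneg (by exact_mod_cast hc1)).mul_left ‖y‖
  have hsum : ∀ i, Summable fun n : ℕ => ((M ^ n) *ᵥ y) i := by
    intro i
    apply Summable.of_norm_bounded_eventually_nat hgeom
    filter_upwards [hbound] with n hn
    calc ‖((M ^ n) *ᵥ y) i‖ ≤ ‖(M ^ n) *ᵥ y‖ := norm_le_pi_norm _ i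
      _ ≤ ‖M ^ n‖ * ‖y‖ := Matrix.linfty_opNorm_mulVec _ _
      _ ≤ (c:ℝ) ^ n * ‖y‖ := mul_le_mul_of_nonneg_right hn (norm_nonneg _)
      _ = ‖y‖ * (c:ℝ) ^ n := mul_comm _ _
  have hterm : ∀ (n : ℕ) (i : Fin N), 0 ≤ ((M ^ n) *ᵥ y) i := by
    intro n i
    simp only [Matrix.mulVec, dotProduct]
    exact Finset.sum_nonneg fun k _ => mul_nonneg (pow_entry_nonneg hMnn n i k) (hy k)
  set u : Fin N → ℝ := fun i => ∑' n : ℕ, ((M ^ n) *ᵥ y) i with hu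
  have h0 : ∀ i, ((M ^ 0) *ᵥ y) i = y i := by
    intro i; simp [Matrix.one_mulVec]
  refine ⟨u, ?_, ?_⟩
  · intro i
    have hle := Summable.le_tsum (hsum i) 0 (fun m _ => hterm m i)
    rw [h0 i] at hle
    exact hle
  · intro i
    have hMu : (M *ᵥ u) i = ∑' n : ℕ, ((M ^ (n+1)) *ᵥ y) i := by
      have h1 : (M *ᵥ u) i = ∑ k, M i k * ∑' n : ℕ, ((M ^ n) *ᵥ y) k := by
        simp [Matrix.mulVec, dotProduct, hu]
      rw [h1]
      have h2 : ∀ k : Fin N, M i k * (∑' n : ℕ, ((M ^ n) *ᵥ y) k)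
          = ∑' n : ℕ, M i k * ((M ^ n) *ᵥ y) k := fun k => (tsum_mul_left).symm
      simp_rw [h2]
      rw [← Summable.tsum_finsetSum (fun k _ => (hsum k).mul_left (M i k))]
      congr 1
      funext n
      rw [pow_succ', ← Matrix.mulVec_mulVec]
      simp [Matrix.mulVec, dotProduct]
    rw [hMu]
    have hshift : u i = ((M ^ 0) *ᵥ y) i + ∑' n : ℕ, ((M ^ (n+1)) *ᵥ y) i :=
      Summable.tsum_eq_zero_add (hsum i)
    rw [hshift, h0 i]

end Aux

/-- If the lower bounding matrix has spectral radius < 1 and the mapping is dominated by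
the affine mapping x ↦ y + Mx for some strictly positive y, then a fixed point exists. -/
theorem fixed_point_of_specRad_lt_one_and_affine_majorant {N : ℕ}
    (f : Fin N → (Fin N → ℝ) → ℝ)
    (hconc : ∀ i, ConcaveOn ℝ {x : Fin N → ℝ | 0 ≤ x} (f i))
    (husc : ∀ i, UpperSemicontinuousOn (f i) {x : Fin N → ℝ | 0 ≤ x})
    (hpos : ∀ i, ∀ x : Fin N → ℝ, 0 ≤ x → 0 < f i x)
    (M : Matrix (Fin N) (Fin N) ℝ) (hM : IsLBM f M)
    (hrad : specRad M < 1)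
    (hub : ∃ y : Fin N → ℝ, (∀ i, 0 < y i) ∧
      ∀ x : Fin N → ℝ, 0 ≤ x → ∀ i, f i x ≤ y i + (M *ᵥ x) i) :
    ∃ xstar : Fin N → ℝ, (∀ i, 0 < xstar i) ∧ (fun i => f i xstar) = xstar := by
  classical
  obtain ⟨y, hy, hub⟩ := hub
  have hMnn := lbm_nonneg hpos hM
  obtain ⟨u, huy, hueq⟩ := exists_affine_fixed M hMnn hrad y (fun i => (hy i).le)
  have hu0 : (0 : Fin N → ℝ) ≤ u := fun i => le_trans (hy i).le (huy i)
  set T : (Fin N → ℝ) → (Fin N → ℝ) := fun x i => f i x with hT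
  have hmono : ∀ a b : Fin N → ℝ, 0 ≤ a → a ≤ b → T a ≤ T b := by
    intro a b ha hab i
    exact mono_of_concave_pos (hconc i) (hpos i) ha hab
  have hTpos : ∀ x : Fin N → ℝ, 0 ≤ x → (0 : Fin N → ℝ) ≤ T x :=
    fun x hx i => (hpos i x hx).le
  have hTu : T u ≤ u := by
    intro i
    calc f i u ≤ y i + (M *ᵥ u) i := hub u hu0 i
      _ = u i := hueq i
  set s : ℕ → (Fin N → ℝ) := fun n => T^[n] u with hs
  have hs_succ : ∀ n, s (n + 1) = T (s n) := by
    intro n; simp [hs, Function.iterate_succ_apply']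
  have hs0 : ∀ n, (0 : Fin N → ℝ) ≤ s n := by
    intro n
    induction n with
    | zero => simpa [hs] using hu0
    | succ n ih => rw [hs_succ]; exact hTpos _ ih
  have hdec : ∀ n, s (n + 1) ≤ s n := by
    intro n
    induction n with
    | zero => rw [hs_succ]; simpa [hs] using hTu
    | succ n ih =>
      rw [hs_succ (n+1)]
      calc T (s (n+1)) ≤ T (s n) := hmono _ _ (hs0 (n+1)) ih
        _ = s (n+1) := (hs_succ n).symm
  have hanti : ∀ i, Antitone fun n => s n i := by
    intro i
    exact antitone_nat_of_succ_le fun n => hdec n i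
  have hbdd : ∀ i, BddBelow (Set.range fun n => s n i) := by
    intro i
    exact ⟨0, by rintro _ ⟨n, rfl⟩; exact hs0 n i⟩
  set xstar : Fin N → ℝ := fun i => ⨅ n : ℕ, s n i with hxstar
  have hxle : ∀ n, xstar ≤ s n := by
    intro n i
    exact ciInf_le (hbdd i) n
  have hx0 : (0 : Fin N → ℝ) ≤ xstar := by
    intro i
    exact le_ciInf fun n => hs0 n i
  have hfix_le : ∀ i, f i xstar ≤ xstar i := by
    intro i
    apply le_ciInf
    intro n
    calc f i xstar = T xstar i := rfl
      _ ≤ T (s n) i := hmono _ _ hx0 (hxle n) i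
      _ = s (n+1) i := by rw [hs_succ]
      _ ≤ s n i := hdec n i
  have hxpos : ∀ i, 0 < xstar i := fun i => lt_of_lt_of_le (hpos i xstar hx0) (hfix_le i)
  have htend : Tendsto s atTop (𝓝 xstar) := by
    rw [tendsto_pi_nhds]
    intro i
    exact tendsto_atTop_ciInf (hanti i) (hbdd i)
  have htendW : Tendsto s atTop (𝓝[{x : Fin N → ℝ | 0 ≤ x}] xstar) :=
    tendsto_nhdsWithin_of_tendsto_nhds_of_eventually_within _ htend
      (Eventually.of_forall fun n => hs0 n)
  have hfix_ge : ∀ i, xstar i ≤ f i xstar := by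
    intro i
    by_contra hlt
    push_neg at hlt
    have husc' := husc i xstar hx0 (xstar i) hlt
    have hev := htendW.eventually husc'
    obtain ⟨n, hn⟩ := hev.exists
    have : xstar i ≤ f i (s n) := by
      calc xstar i ≤ s (n+1) i := hxle (n+1) i
        _ = f i (s n) := by rw [hs_succ]
    exact absurd (lt_of_le_of_lt this hn) (lt_irrefl _)
  exact ⟨xstar, hxpos, funext fun i => le_antisymm (hfix_le i) (hfix_ge i)⟩
end
end
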